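/- Let K be an algebraically closed field and F(x,y) an irreducible polynomial with vanishing set V ⊆ K^2. Then there exists a finite subset E of V such that either ∂F/∂x(a) ≠ 0 for all a ∈ V \ E, or ∂F/∂y(a) ≠ 0 for all a ∈ V \ E. -/

import Mathlib

open Polynomial

noncomputable section

namespace Stmt2Aux

variable {K : Type*} [Field K]

lemma coeff_pderiv {R : Type*} [CommSemiring R] {σ : Type*} [DecidableEq σ] (i : σ)
    (F : MvPolynomial σ R) (m : σ →₀ ℕ) :
    MvPolynomial.coeff m (MvPolynomial.pderiv i F) =
      (m i + 1) * MvPolynomial.coeff (m + Finsupp.single i 1) F := by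
  induction F using MvPolynomial.induction_on' with
  | monomial s a =>
    rw [MvPolynomial.pderiv_monomial, MvPolynomial.coeff_monomial, MvPolynomial.coeff_monomial]
    by_cases hs : s = m + Finsupp.single i 1
    · subst hs
      rw [if_pos, if_pos rfl]
      · push_cast
        simp [Finsupp.add_apply, Finsupp.single_apply, mul_comm]
      · simp [add_tsub_cancel_right]
    · rw [if_neg hs, mul_zero]
      by_cases hsm : s - Finsupp.single i 1 = m
      · rw [if_pos hsm]
        have hsi : s i = 0 := by
          by_contra hne
          apply hs
          rw [← hsm, tsub_add_cancel_of_le]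
          intro j
          simp only [Finsupp.single_apply]
          by_cases hj : i = j
          · subst hj; rw [if_pos rfl]; omega
          · simp [hj]
        simp [hsi]
      · rw [if_neg hsm]
  | add p q hp hq =>
    simp [map_add, MvPolynomial.coeff_add, hp, hq, mul_add]

end Stmt2Aux

namespace Stmt2Aux

lemma pderiv_ne_zero {K : Type*} [Field K] [IsAlgClosed K]
    (F : MvPolynomial (Fin 2) K) (hirr : Irreducible F) :
    MvPolynomial.pderiv 0 F ≠ 0 ∨ MvPolynomial.pderiv 1 F ≠ 0 := by
  by_contra h
  push_neg at h
  obtain ⟨h0, h1⟩ := h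
  have hcoeff : ∀ (i : Fin 2) (m : Fin 2 →₀ ℕ),
      ((m i + 1 : ℕ) : K) * MvPolynomial.coeff (m + Finsupp.single i 1) F = 0 := by
    intro i m
    have := coeff_pderiv i F m
    have hz : MvPolynomial.pderiv i F = 0 := by
      fin_cases i
      · exact h0
      · exact h1
    rw [hz] at this
    simpa using this.symm
  -- key consequence: coeff m F = 0 whenever (char K) does not divide (m i)
  obtain ⟨p, hp⟩ := CharP.exists K
  rcases CharP.char_is_prime_or_zero K p with hprime | hzero
  · -- char p prime: all exponents divisible by p, F is a p-th power
    haveI : Fact p.Prime := ⟨hprime⟩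
    have hdvd : ∀ m ∈ F.support, ∀ i : Fin 2, p ∣ m i := by
      intro m hm i
      by_contra hnd
      have hmi : m i ≠ 0 := by rintro h; exact hnd (h ▸ dvd_zero p)
      have := hcoeff i (m - Finsupp.single i 1)
      have hrec : (m - Finsupp.single i 1) + Finsupp.single i 1 = m := by
        ext j
        simp only [Finsupp.add_apply, Finsupp.tsub_apply, Finsupp.single_apply]
        by_cases hj : i = j
        · subst hj; rw [if_pos rfl]; omega
        · rw [if_neg hj]; omega
      rw [hrec] at this
      have hval : ((m - Finsupp.single i 1 : Fin 2 →₀ ℕ)) i + 1 = m i := by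
        rw [Finsupp.tsub_apply, Finsupp.single_eq_same]
        omega
      rw [hval] at this
      have hcast : ((m i : ℕ) : K) ≠ 0 := by
        rw [Ne, CharP.cast_eq_zero_iff K p]
        exact hnd
      have : MvPolynomial.coeff m F = 0 := by
        rcases mul_eq_zero.mp this with h | h
        · exact absurd h hcast
        · exact h
      exact (MvPolynomial.mem_support_iff.mp hm) this
    -- construct p-th root
    let ρ : K → K := fun x => (frobeniusEquiv K p).symm x
    have hρ : ∀ x : K, ρ x ^ p = x := fun x => frobeniusEquiv_symm_pow_p K p x
    let mdiv : (Fin 2 →₀ ℕ) → (Fin 2 →₀ ℕ) := fun m => Finsupp.mapRange (· / p) (Nat.zero_div p) m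
    let G : MvPolynomial (Fin 2) K :=
      F.support.sum fun m => MvPolynomial.monomial (mdiv m) (ρ (MvPolynomial.coeff m F))
    have hGp : G ^ p = F := by
      rw [sum_pow_char]
      conv_rhs => rw [← MvPolynomial.support_sum_monomial_coeff F]
      apply Finset.sum_congr rfl
      intro m hm
      have hsm : p • mdiv m = m := by
        ext j
        simp only [Finsupp.smul_apply, Finsupp.mapRange_apply, smul_eq_mul, mdiv]
        exact Nat.mul_div_cancel' (hdvd m hm j)
      rw [MvPolynomial.monomial_pow, hρ, hsm]
    have hlt : 2 ≤ p := hprime.two_le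
    have : IsUnit G := by
      rcases hirr.isUnit_or_isUnit (a := G) (b := G ^ (p - 1)) (by
        rw [← hGp, ← pow_succ']
        congr 1
        omega) with h | h
      · exact h
      · exact (isUnit_pow_iff (by omega : p - 1 ≠ 0)).mp h
    exact hirr.not_isUnit (by rw [← hGp]; exact this.pow p)
  · -- char 0: F is constant
    subst hzero
    haveI : CharZero K := CharP.charP_to_charZero K
    have hzero' : ∀ m : Fin 2 →₀ ℕ, m ≠ 0 → MvPolynomial.coeff m F = 0 := by
      intro m hm
      obtain ⟨i, hi⟩ : ∃ i, m i ≠ 0 := by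
        by_contra h
        push_neg at h
        exact hm (Finsupp.ext fun i => h i)
      have hrec : (m - Finsupp.single i 1) + Finsupp.single i 1 = m := by
        ext j
        simp only [Finsupp.add_apply, Finsupp.tsub_apply, Finsupp.single_apply]
        by_cases hj : i = j
        · subst hj; rw [if_pos rfl]; omega
        · rw [if_neg hj]; omega
      have := hcoeff i (m - Finsupp.single i 1)
      rw [hrec] at this
      rcases mul_eq_zero.mp this with h | h
      · exact absurd h (Nat.cast_ne_zero.mpr (Nat.succ_ne_zero _))
      · exact h
    have : F = MvPolynomial.C (MvPolynomial.coeff 0 F) := by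
      apply MvPolynomial.ext
      intro m
      rw [MvPolynomial.coeff_C]
      by_cases hm : 0 = m
      · subst hm; rw [if_pos rfl]
      · rw [if_neg hm]; exact hzero' m (Ne.symm hm)
    have hC : MvPolynomial.coeff 0 F ≠ 0 := by
      intro h
      rw [h, map_zero] at this
      exact hirr.ne_zero this
    exact hirr.not_isUnit (this ▸ (isUnit_iff_ne_zero.mpr hC).map MvPolynomial.C)

end Stmt2Aux

namespace Stmt2Aux

variable {K : Type*} [Field K]

lemma degreeOf_zero_mul (p q : MvPolynomial (Fin 2) K) (hp : p ≠ 0) (hq : q ≠ 0) :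
    MvPolynomial.degreeOf 0 (p * q) = MvPolynomial.degreeOf 0 p + MvPolynomial.degreeOf 0 q := by
  have e := MvPolynomial.finSuccEquiv K 1
  have hpne : MvPolynomial.finSuccEquiv K 1 p ≠ 0 := by
    rw [Ne, map_eq_zero_iff _ (MvPolynomial.finSuccEquiv K 1).injective]; exact hp
  have hqne : MvPolynomial.finSuccEquiv K 1 q ≠ 0 := by
    rw [Ne, map_eq_zero_iff _ (MvPolynomial.finSuccEquiv K 1).injective]; exact hq
  rw [← MvPolynomial.natDegree_finSuccEquiv, ← MvPolynomial.natDegree_finSuccEquiv,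
    ← MvPolynomial.natDegree_finSuccEquiv, map_mul]
  exact Polynomial.natDegree_mul hpne hqne

lemma degreeOf_mul (i : Fin 2) (p q : MvPolynomial (Fin 2) K) (hp : p ≠ 0) (hq : q ≠ 0) :
    MvPolynomial.degreeOf i (p * q) = MvPolynomial.degreeOf i p + MvPolynomial.degreeOf i q := by
  fin_cases i
  · exact degreeOf_zero_mul p q hp hq
  · set τ : Fin 2 → Fin 2 := ⇑(Equiv.swap (0 : Fin 2) 1)
    have hτ : Function.Injective τ := (Equiv.swap 0 1).injective
    have h1 : τ 1 = 0 := Equiv.swap_apply_right 0 1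
    have key : ∀ r : MvPolynomial (Fin 2) K,
        MvPolynomial.degreeOf 0 (MvPolynomial.rename τ r) = MvPolynomial.degreeOf 1 r := by
      intro r
      have := MvPolynomial.degreeOf_rename_of_injective (p := r) hτ 1
      rwa [h1] at this
    have hrp : MvPolynomial.rename τ p ≠ 0 := by
      rw [Ne, map_eq_zero_iff _ (MvPolynomial.rename_injective τ hτ)]; exact hp
    have hrq : MvPolynomial.rename τ q ≠ 0 := by
      rw [Ne, map_eq_zero_iff _ (MvPolynomial.rename_injective τ hτ)]; exact hq
    have := degreeOf_zero_mul (MvPolynomial.rename τ p) (MvPolynomial.rename τ q) hrp hrq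
    rw [← map_mul, key, key, key] at this
    simpa using this

lemma not_dvd_pderiv (i : Fin 2) (F : MvPolynomial (Fin 2) K) (hirr : Irreducible F)
    (hne : MvPolynomial.pderiv i F ≠ 0) : ¬ F ∣ MvPolynomial.pderiv i F := by
  classical
  intro hdvd
  obtain ⟨H, hH⟩ := hdvd
  have hHne : H ≠ 0 := by
    rintro rfl
    rw [mul_zero] at hH
    exact hne hH
  have hFne : F ≠ 0 := hirr.ne_zero
  -- degreeOf i F ≥ 1
  have hsup : ∃ m ∈ (MvPolynomial.pderiv i F).support, True := by
    obtain ⟨m, hm⟩ := Finset.nonempty_iff_ne_empty.mpr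
      (fun h => hne (MvPolynomial.support_eq_empty.mp h))
    exact ⟨m, hm, trivial⟩
  obtain ⟨m, hm, -⟩ := hsup
  have hcm : MvPolynomial.coeff (m + Finsupp.single i 1) F ≠ 0 := by
    intro h
    apply MvPolynomial.mem_support_iff.mp hm
    rw [coeff_pderiv, h, mul_zero]
  have hdegF : 1 ≤ MvPolynomial.degreeOf i F := by
    have hmem : m + Finsupp.single i 1 ∈ F.support := MvPolynomial.mem_support_iff.mpr hcm
    have := MvPolynomial.monomial_le_degreeOf i hmem
    rw [Finsupp.add_apply, Finsupp.single_eq_same] at this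
    omega
  -- degreeOf i (pderiv i F) < degreeOf i F
  have hlt : MvPolynomial.degreeOf i (MvPolynomial.pderiv i F) < MvPolynomial.degreeOf i F := by
    rw [MvPolynomial.degreeOf_lt_iff (by omega)]
    intro s hs
    have hcs : MvPolynomial.coeff (s + Finsupp.single i 1) F ≠ 0 := by
      intro h
      apply MvPolynomial.mem_support_iff.mp hs
      rw [coeff_pderiv, h, mul_zero]
    have hmem : s + Finsupp.single i 1 ∈ F.support := MvPolynomial.mem_support_iff.mpr hcs
    have := MvPolynomial.monomial_le_degreeOf i hmem
    rw [Finsupp.add_apply, Finsupp.single_eq_same] at this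
    omega
  rw [hH, degreeOf_mul i F H hFne hHne] at hlt
  omega

end Stmt2Aux

namespace Stmt2Aux

variable {K : Type*} [Field K]

variable (K) in
/-- The inner equivalence `MvPolynomial (Fin 1) K ≃ₐ[K] K[X]`. -/
def ψ : MvPolynomial (Fin 1) K ≃ₐ[K] Polynomial K :=
  (MvPolynomial.finSuccEquiv K 0).trans (Polynomial.mapAlgEquiv (MvPolynomial.isEmptyAlgEquiv K (Fin 0)))

variable (K) in
/-- The equivalence `MvPolynomial (Fin 2) K ≃ₐ[K] (K[Y])[X]`. -/
def e : MvPolynomial (Fin 2) K ≃ₐ[K] Polynomial (Polynomial K) :=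
  (MvPolynomial.finSuccEquiv K 1).trans (Polynomial.mapAlgEquiv (ψ K))

lemma psi_eq (b : K) :
    (Polynomial.evalRingHom b).comp (ψ K).toAlgHom.toRingHom =
      (MvPolynomial.eval ![b] : MvPolynomial (Fin 1) K →+* K) := by
  apply MvPolynomial.ringHom_ext
  · intro c
    have : (MvPolynomial.finSuccEquiv K 0) (MvPolynomial.C c) = Polynomial.C (MvPolynomial.C c) := by
      simp [MvPolynomial.finSuccEquiv_apply]
    simp [ψ, this]
    exact MvPolynomial.coeff_zero_C (σ := Fin 0) c
  · intro i
    have : i = 0 := Subsingleton.elim i 0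
    subst this
    simp [ψ, MvPolynomial.finSuccEquiv_X_zero]

lemma eval_e (F : MvPolynomial (Fin 2) K) (a b : K) :
    MvPolynomial.eval ![a, b] F =
      Polynomial.eval a (Polynomial.map (Polynomial.evalRingHom b) (e K F)) := by
  have h1 : (![a, b] : Fin 2 → K) = Fin.cons a ![b] := by
    funext j
    fin_cases j <;> rfl
  rw [h1, MvPolynomial.eval_eq_eval_mv_eval']
  congr 1
  have : e K F = Polynomial.map (ψ K).toAlgHom.toRingHom (MvPolynomial.finSuccEquiv K 1 F) := by
    rw [e, AlgEquiv.trans_apply, Polynomial.coe_mapAlgEquiv]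
    rfl
  rw [this, Polynomial.map_map, psi_eq]

end Stmt2Aux

namespace Stmt2Aux

variable {K : Type*} [Field K]

lemma Cdvd_of_map_eq_zero (p : Polynomial (Polynomial K)) (b : K)
    (h : p.map (Polynomial.evalRingHom b) = 0) :
    Polynomial.C (Polynomial.X - Polynomial.C b) ∣ p := by
  rw [Polynomial.C_dvd_iff_dvd_coeff]
  intro n
  rw [Polynomial.dvd_iff_isRoot]
  have := congrArg (fun q => Polynomial.coeff q n) h
  simpa [Polynomial.coeff_map] using this

lemma finite_fibered {S : Set (K × K)} (B : Set K) (hB : B.Finite)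
    (hmem : ∀ p ∈ S, p.2 ∈ B) (hfib : ∀ b ∈ B, {a : K | (a, b) ∈ S}.Finite) : S.Finite := by
  have hsub : S ⊆ ⋃ b ∈ B, (fun a => (a, b)) '' {a : K | (a, b) ∈ S} := by
    rintro ⟨a, b⟩ hab
    exact Set.mem_biUnion (hmem _ hab) ⟨a, hab, rfl⟩
  exact Set.Finite.subset (Set.Finite.biUnion hB fun b hb => (hfib b hb).image _) hsub

lemma roots_finite (p : Polynomial K) (hp : p ≠ 0) : {a : K | p.eval a = 0}.Finite := by
  classical
  apply Set.Finite.subset p.roots.toFinset.finite_toSet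
  intro a ha
  rw [Set.mem_setOf_eq] at ha
  simp only [Finset.coe_sort_coe, Multiset.mem_toFinset, Finset.mem_coe,
    Polynomial.mem_roots hp]
  exact ha

/-- The key finiteness lemma: two coprime curves meet in finitely many points. -/
lemma key_finite [IsAlgClosed K] (f g : Polynomial (Polynomial K)) (hf : Irreducible f)
    (hndvd : ¬ f ∣ g) :
    {ab : K × K | (f.map (Polynomial.evalRingHom ab.2)).eval ab.1 = 0 ∧
        (g.map (Polynomial.evalRingHom ab.2)).eval ab.1 = 0}.Finite := by
  classical
  set S := {ab : K × K | (f.map (Polynomial.evalRingHom ab.2)).eval ab.1 = 0 ∧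
        (g.map (Polynomial.evalRingHom ab.2)).eval ab.1 = 0} with hS
  by_cases hdeg : f.natDegree = 0
  · -- f = C c with c irreducible in K[Y]
    obtain ⟨c, hc⟩ := Polynomial.natDegree_eq_zero.mp hdeg
    have hcirr : Irreducible c := by
      constructor
      · intro h
        exact hf.not_isUnit (hc ▸ h.map Polynomial.C)
      · intro u v huv
        rcases hf.isUnit_or_isUnit (a := Polynomial.C u) (b := Polynomial.C v)
          (by rw [← hc, huv, map_mul]) with h | h
        · exact Or.inl (Polynomial.isUnit_C.mp h)
        · exact Or.inr (Polynomial.isUnit_C.mp h)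
    apply finite_fibered {b : K | c.eval b = 0} (roots_finite c hcirr.ne_zero)
    · rintro ⟨a, b⟩ ⟨h1, h2⟩
      have : (f.map (Polynomial.evalRingHom b)).eval a = c.eval b := by
        rw [← hc]
        simp
      rw [this] at h1
      exact h1
    · intro b hb
      have hroot : Polynomial.IsRoot c b := hb
      have hgb : g.map (Polynomial.evalRingHom b) ≠ 0 := by
        intro hzero
        have hdvd1 : Polynomial.C (Polynomial.X - Polynomial.C b) ∣ g :=
          Cdvd_of_map_eq_zero g b hzero
        obtain ⟨d, hd⟩ := (Polynomial.dvd_iff_isRoot).mpr hroot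
        have : IsUnit d := by
          rcases hcirr.isUnit_or_isUnit hd with h | h
          · exact absurd h (Polynomial.not_isUnit_X_sub_C b)
          · exact h
        apply hndvd
        have hfd : f = Polynomial.C (Polynomial.X - Polynomial.C b) * Polynomial.C d := by
          rw [← hc, hd, map_mul]
        have hCd : IsUnit (Polynomial.C d : Polynomial (Polynomial K)) :=
          this.map Polynomial.C
        obtain ⟨du, hdu⟩ := hCd
        have hfdvd : f ∣ Polynomial.C (Polynomial.X - Polynomial.C b) :=
          ⟨↑du⁻¹, by rw [hfd, ← hdu, mul_assoc, Units.mul_inv, mul_one]⟩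
        exact hfdvd.trans hdvd1
      apply Set.Finite.subset (roots_finite (g.map (Polynomial.evalRingHom b)) hgb)
      rintro a ⟨-, h2⟩
      exact h2
  · -- f has positive degree in the outer variable: f is primitive
    have hprim : f.IsPrimitive := by
      intro r hr
      obtain ⟨w, hw⟩ := hr
      rcases hf.isUnit_or_isUnit hw with h | h
      · exact Polynomial.isUnit_C.mp h
      · exfalso
        obtain ⟨wu, hwu, hwc⟩ := Polynomial.isUnit_iff.mp h
        apply hdeg
        rw [hw, ← hwc, ← map_mul, Polynomial.natDegree_C]
    set L := FractionRing (Polynomial K)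
    set φ := algebraMap (Polynomial K) L with hφ
    have hφinj : Function.Injective φ := IsFractionRing.injective _ _
    have hf' : Irreducible (f.map φ) :=
      (hprim.irreducible_iff_irreducible_map_fraction_map).mp hf
    have hg0 : g ≠ 0 := fun h => hndvd (h ▸ dvd_zero f)
    have hndvd' : ¬ f.map φ ∣ g.map φ := by
      intro hdvd
      apply hndvd
      have hcont : φ g.content ≠ 0 := fun h => (Polynomial.content_eq_zero_iff.not.mpr hg0)
        (hφinj (h.trans (map_zero φ).symm))
      have hunit : IsUnit (Polynomial.C (φ g.content)) :=
        Polynomial.isUnit_C.mpr (isUnit_iff_ne_zero.mpr hcont)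
      have hgm : g.map φ = Polynomial.C (φ g.content) * (g.primPart.map φ) := by
        conv_lhs => rw [g.eq_C_content_mul_primPart]
        rw [Polynomial.map_mul, Polynomial.map_C]
      have hdvd2 : f.map φ ∣ g.primPart.map φ := by
        rwa [hgm, hunit.dvd_mul_left] at hdvd
      have := hprim.dvd_of_fraction_map_dvd_fraction_map hdvd2
      exact this.trans g.primPart_dvd
    have hcop : IsCoprime (f.map φ) (g.map φ) := (hf'.coprime_iff_not_dvd).mpr hndvd'
    obtain ⟨u, v, huv⟩ := hcop
    obtain ⟨c, hcu⟩ := IsLocalization.integerNormalization_map_to_map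
      (nonZeroDivisors (Polynomial K)) u
    obtain ⟨d, hdv⟩ := IsLocalization.integerNormalization_map_to_map
      (nonZeroDivisors (Polynomial K)) v
    set U := IsLocalization.integerNormalization (nonZeroDivisors (Polynomial K)) u with hU
    set V' := IsLocalization.integerNormalization (nonZeroDivisors (Polynomial K)) v with hV'
    rw [← hφ] at hcu hdv
    have hkey : U * f * Polynomial.C (d : Polynomial K) +
        V' * g * Polynomial.C (c : Polynomial K) =
        Polynomial.C ((c : Polynomial K) * (d : Polynomial K)) := by
      apply Polynomial.map_injective φ hφinj
      rw [Polynomial.map_add, Polynomial.map_mul, Polynomial.map_mul, Polynomial.map_mul,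
        Polynomial.map_mul, Polynomial.map_C, Polynomial.map_C, Polynomial.map_C,
        hcu, hdv]
      rw [Algebra.smul_def, Algebra.smul_def]
      have halg : ∀ r : Polynomial K, algebraMap (Polynomial K) (Polynomial L) r =
          Polynomial.C (φ r) := fun r => by
        rw [Polynomial.algebraMap_apply]
      rw [halg, halg]
      calc Polynomial.C (φ ↑c) * u * f.map φ * Polynomial.C (φ ↑d) +
            Polynomial.C (φ ↑d) * v * g.map φ * Polynomial.C (φ ↑c)
          = Polynomial.C (φ ↑c) * Polynomial.C (φ ↑d) * (u * f.map φ + v * g.map φ) := by ring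
        _ = Polynomial.C (φ ↑c) * Polynomial.C (φ ↑d) := by rw [huv, mul_one]
        _ = Polynomial.C (φ (↑c * ↑d)) := by rw [map_mul, map_mul]
    have hcd : (c : Polynomial K) * (d : Polynomial K) ≠ 0 :=
      mul_ne_zero (nonZeroDivisors.ne_zero c.2) (nonZeroDivisors.ne_zero d.2)
    apply finite_fibered {b : K | ((c : Polynomial K) * (d : Polynomial K)).eval b = 0}
      (roots_finite _ hcd)
    · rintro ⟨a, b⟩ ⟨h1, h2⟩
      have := congrArg (fun p : Polynomial (Polynomial K) =>
        (p.map (Polynomial.evalRingHom b)).eval a) hkey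
      simp only [Polynomial.map_add, Polynomial.map_mul, Polynomial.map_C,
        Polynomial.eval_add, Polynomial.eval_mul, Polynomial.eval_C, h1, h2,
        mul_zero, zero_mul, add_zero, zero_add] at this
      simpa using this.symm
    · intro b hb
      have hfb : f.map (Polynomial.evalRingHom b) ≠ 0 := by
        intro hzero
        have hdvd1 := Cdvd_of_map_eq_zero f b hzero
        obtain ⟨w, hw⟩ := hdvd1
        rcases hf.isUnit_or_isUnit hw with h | h
        · exact Polynomial.not_isUnit_X_sub_C b (Polynomial.isUnit_C.mp h)
        · obtain ⟨wu, hwu, hwc⟩ := Polynomial.isUnit_iff.mp h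
          apply hdeg
          rw [hw, ← hwc, ← map_mul, Polynomial.natDegree_C]
      apply Set.Finite.subset (roots_finite (f.map (Polynomial.evalRingHom b)) hfb)
      rintro a ⟨h1, -⟩
      exact h1

end Stmt2Aux

namespace Stmt2Aux

lemma common_zeros_finite {K : Type*} [Field K] [IsAlgClosed K]
    (F G : MvPolynomial (Fin 2) K) (hirr : Irreducible F) (hndvd : ¬ F ∣ G) :
    {ab : K × K | MvPolynomial.eval ![ab.1, ab.2] F = 0 ∧
      MvPolynomial.eval ![ab.1, ab.2] G = 0}.Finite := by
  have hf : Irreducible (e K F) := hirr.map (e K)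
  have hndvd' : ¬ e K F ∣ e K G := by
    rintro ⟨h, hh⟩
    apply hndvd
    refine ⟨(e K).symm h, ?_⟩
    have := congrArg (e K).symm hh
    rwa [AlgEquiv.symm_apply_apply, map_mul, AlgEquiv.symm_apply_apply] at this
  have := key_finite (e K F) (e K G) hf hndvd'
  apply Set.Finite.subset this
  rintro ⟨a, b⟩ ⟨h1, h2⟩
  constructor
  · rw [← eval_e]; exact h1
  · rw [← eval_e]; exact h2

end Stmt2Aux

open Stmt2Aux in
theorem stmt2 {K : Type*} [Field K] [IsAlgClosed K]
    (F : MvPolynomial (Fin 2) K) (hirr : Irreducible F)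
    (V : Set (K × K)) (hV : V = {ab : K × K | MvPolynomial.eval ![ab.1, ab.2] F = 0}) :
    ∃ E : Set (K × K), E ⊆ V ∧ E.Finite ∧
      ((∀ a ∈ V \ E, MvPolynomial.eval ![a.1, a.2] (MvPolynomial.pderiv 0 F) ≠ 0) ∨
       (∀ a ∈ V \ E, MvPolynomial.eval ![a.1, a.2] (MvPolynomial.pderiv 1 F) ≠ 0)) := by
  have main : ∀ i : Fin 2, MvPolynomial.pderiv i F ≠ 0 →
      ∃ E : Set (K × K), E ⊆ V ∧ E.Finite ∧
        (∀ a ∈ V \ E, MvPolynomial.eval ![a.1, a.2] (MvPolynomial.pderiv i F) ≠ 0) := by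
    intro i hne
    refine ⟨{ab : K × K | MvPolynomial.eval ![ab.1, ab.2] F = 0 ∧
      MvPolynomial.eval ![ab.1, ab.2] (MvPolynomial.pderiv i F) = 0}, ?_, ?_, ?_⟩
    · intro ab hab
      rw [hV]
      exact hab.1
    · exact common_zeros_finite F (MvPolynomial.pderiv i F) hirr (not_dvd_pderiv i F hirr hne)
    · rintro a ⟨haV, haE⟩ hG
      exact haE ⟨by rw [hV] at haV; exact haV, hG⟩
  rcases pderiv_ne_zero F hirr with h | h
  · obtain ⟨E, h1, h2, h3⟩ := main 0 h
    exact ⟨E, h1, h2, Or.inl h3⟩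
  · obtain ⟨E, h1, h2, h3⟩ := main 1 h
    exact ⟨E, h1, h2, Or.inr h3⟩
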